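/- Let F be a linear ordered field equipped with its order topology, X a topological space, and A(X,F) an intermediate ring. Then A(X,F) is an absolutely convex subring of C(X,F): if f ∈ C(X,F), g ∈ A(X,F) and |f(x)| ≤ |g(x)| for all x ∈ X, then f ∈ A(X,F). -/

import Mathlib

open Set

/-- `Pz a` : the intersection of all minimal prime ideals of `R` which contain `a`. -/
def Pz {R : Type*} [CommRing R] (a : R) : Set R :=
  ⋂ P ∈ {P : Ideal R | P ∈ minimalPrimes R ∧ a ∈ P}, (P : Set R)

/-- A proper ideal `I` is a `z°`-ideal if `Pz a ⊆ I` for every `a ∈ I`. -/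
def IsZoIdeal {R : Type*} [CommRing R] (I : Ideal R) : Prop :=
  I ≠ ⊤ ∧ ∀ a ∈ I, Pz a ⊆ (I : Set R)

/-- The zero set `Z(f)` of a continuous function `f`. -/
def ZSet {X F : Type*} [TopologicalSpace X] [TopologicalSpace F] [Zero F]
    (f : C(X, F)) : Set X := {x | f x = 0}

/-- `f` is bounded over `X` (i.e. `f ∈ B(X,F)`). -/
def BddF {X F : Type*} [TopologicalSpace X] [Field F] [LinearOrder F] [IsStrictOrderedRing F] [TopologicalSpace F]
    (f : C(X, F)) : Prop := ∃ l : F, 0 < l ∧ ∀ x, |f x| ≤ l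

/-- `X` is completely `F`-regular: Hausdorff, and points can be separated from closed
sets by bounded `F`-valued continuous functions. -/
def CompletelyFRegular (X F : Type*) [TopologicalSpace X] [Field F] [LinearOrder F] [IsStrictOrderedRing F]
    [TopologicalSpace F] : Prop :=
  T2Space X ∧ ∀ K : Set X, IsClosed K → ∀ x ∉ K, ∃ f : C(X, F),
    BddF f ∧ f x = 0 ∧ ∀ k ∈ K, f k = 1

/-- `A` is an intermediate ring: a subring of `C(X,F)` containing all of `B(X,F)`. -/
def IsIntermediate {X F : Type*} [TopologicalSpace X] [Field F] [LinearOrder F] [IsStrictOrderedRing F]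
    [TopologicalSpace F] [OrderTopology F] (A : Subring C(X, F)) : Prop :=
  ∀ f : C(X, F), BddF f → f ∈ A

/-- An ideal of closed sets in `X`: a nonempty family of closed sets, closed under
finite unions and under passing to closed subsets. -/
def IsIdealOfClosedSets {X : Type*} [TopologicalSpace X] (P : Set (Set X)) : Prop :=
  P.Nonempty ∧ (∀ A ∈ P, IsClosed A) ∧ (∀ A ∈ P, ∀ B ∈ P, A ∪ B ∈ P) ∧
    ∀ C : Set X, IsClosed C → ∀ A ∈ P, C ⊆ A → C ∈ P

/-- `X` is an almost `P_F`-space: every nonempty zero set has nonempty interior. -/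
def AlmostPF (X F : Type*) [TopologicalSpace X] [Field F] [LinearOrder F] [IsStrictOrderedRing F]
    [TopologicalSpace F] : Prop :=
  ∀ f : C(X, F), (ZSet f).Nonempty → (interior (ZSet f)).Nonempty


/-- An intermediate ring A(X,F) is an absolutely convex subring of C(X,F). -/
theorem stmt5 {X F : Type*} [TopologicalSpace X] [Field F] [LinearOrder F] [IsStrictOrderedRing F]
    [TopologicalSpace F] [OrderTopology F]
    (A : Subring C(X, F)) (hA : IsIntermediate A)
    (f g : C(X, F)) (hg : g ∈ A) (hfg : ∀ x, |f x| ≤ |g x|) :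
    f ∈ A := by
  have hpos : ∀ x : X, (0:F) < 1 + g x * g x := fun x => by nlinarith [mul_self_nonneg (g x)]
  let k : C(X, F) := ⟨fun x => f x / (1 + g x * g x),
    f.continuous.div (continuous_const.add (g.continuous.mul g.continuous))
      fun x => (hpos x).ne'⟩
  have hk : BddF k := by
    refine ⟨1, one_pos, fun x => ?_⟩
    have h1 : |f x| ≤ 1 + g x * g x := by
      have := hfg x
      nlinarith [abs_mul_abs_self (g x), abs_nonneg (g x)]
    have : |k x| = |f x| / (1 + g x * g x) := by
      simp [k, abs_div, abs_of_pos (hpos x)]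
    rw [this, div_le_one (hpos x)]
    exact h1
  have hkA := hA k hk
  have hf : f = k + k * g * g := by
    ext x
    have hne := (hpos x).ne'
    simp only [ContinuousMap.add_apply, ContinuousMap.mul_apply, ContinuousMap.coe_mk, k]
    field_simp
  rw [hf]
  exact A.add_mem hkA (A.mul_mem (A.mul_mem hkA hg) hg)
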